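/- Let E, A ∈ ℝ^{n×n} with E^T = E positive semidefinite, A + A^T negative semidefinite, and suppose the nullspaces satisfy N(E) ∩ N(A) = {0}. Then E − A is invertible, the generalized Cayley transform C(E,A) = (E − A)^{-1}(E + A) satisfies C(E,A)^T · E · C(E,A) ≤ E in the Loewner order (i.e., E − C(E,A)^T E C(E,A) is positive semidefinite), and consequently ‖C(E,A) x‖_E ≤ ‖x‖_E for all x ∈ ℝ^n. -/

import Mathlib

open Matrix

private lemma quad_transpose_add {n : ℕ} (A : Matrix (Fin n) (Fin n) ℝ) (v : Fin n → ℝ) :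
    v ⬝ᵥ (A + Aᵀ).mulVec v = 2 * (v ⬝ᵥ A.mulVec v) := by
  rw [add_mulVec, dotProduct_add, mulVec_transpose, dotProduct_comm v (v ᵥ* A),
    ← dotProduct_mulVec]
  ring

/-- If `E` is symmetric positive semidefinite, `A + Aᵀ` is negative semidefinite, and the
nullspaces of `E` and `A` intersect trivially, then `E - A` is invertible, the generalized
Cayley transform `C(E,A) = (E - A)⁻¹ (E + A)` satisfies `C(E,A)ᵀ E C(E,A) ≤ E` in the
Loewner order, and `C(E,A)` is nonexpansive in the energy seminorm `‖x‖_E = (xᵀ E x)^(1/2)`. -/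
theorem cayley_transform_energy_dissipative {n : ℕ}
    (E A : Matrix (Fin n) (Fin n) ℝ)
    (hE : Eᵀ = E) (hEpsd : E.PosSemidef) (hA : (-(A + Aᵀ)).PosSemidef)
    (hker : ∀ v : Fin n → ℝ, E.mulVec v = 0 → A.mulVec v = 0 → v = 0) :
    IsUnit (E - A) ∧
    (E - ((E - A)⁻¹ * (E + A))ᵀ * E * ((E - A)⁻¹ * (E + A))).PosSemidef ∧
    ∀ x : Fin n → ℝ,
      Real.sqrt ((((E - A)⁻¹ * (E + A)).mulVec x) ⬝ᵥ E.mulVec (((E - A)⁻¹ * (E + A)).mulVec x)) ≤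
        Real.sqrt (x ⬝ᵥ E.mulVec x) := by
  -- quadratic form of A is nonpositive
  have hAq : ∀ v : Fin n → ℝ, v ⬝ᵥ A.mulVec v ≤ 0 := by
    intro v
    have h := hA.dotProduct_mulVec_nonneg v
    simp only [star_trivial, neg_mulVec, dotProduct_neg, le_neg, neg_zero] at h
    nlinarith [quad_transpose_add A v]
  -- invertibility
  have hunit : IsUnit (E - A) := by
    rw [Matrix.isUnit_iff_isUnit_det, isUnit_iff_ne_zero]
    intro hdet
    obtain ⟨v, hv0, hv⟩ := (Matrix.exists_mulVec_eq_zero_iff).2 hdet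
    have hEA : E.mulVec v = A.mulVec v := by
      rw [sub_mulVec] at hv
      exact sub_eq_zero.mp hv
    have hEq : v ⬝ᵥ E.mulVec v = 0 :=
      le_antisymm (by rw [hEA]; exact hAq v) (by simpa using hEpsd.dotProduct_mulVec_nonneg v)
    have hEv : E.mulVec v = 0 := (hEpsd.dotProduct_mulVec_zero_iff v).mp (by simpa using hEq)
    exact hv0 (hker v hEv (by rw [← hEA]; exact hEv))
  -- the Cayley transform
  set C : Matrix (Fin n) (Fin n) ℝ := (E - A)⁻¹ * (E + A) with hC
  have hMC : (E - A) * C = E + A := by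
    rw [hC, ← mul_assoc, Matrix.mul_nonsing_inv _ ((Matrix.isUnit_iff_isUnit_det _).mp hunit),
      one_mul]
  -- key quadratic form identity: for y = C x,  yᵀEy - xᵀEx = (x+y)ᵀA(x+y)
  have key : ∀ x : Fin n → ℝ,
      (C.mulVec x) ⬝ᵥ E.mulVec (C.mulVec x) ≤ x ⬝ᵥ E.mulVec x := by
    intro x
    set y := C.mulVec x with hy
    have h1 : (E - A).mulVec y = (E + A).mulVec x := by
      rw [hy, mulVec_mulVec, hMC]
    have h2 : E.mulVec (y - x) = A.mulVec (y + x) := by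
      rw [sub_mulVec, add_mulVec] at h1
      rw [mulVec_sub, mulVec_add]
      have := sub_eq_iff_eq_add.mp h1
      -- E y - A y = E x + A x  →  E y - E x = A y + A x
      funext i
      have h1i := congrFun h1 i
      simp only [Pi.sub_apply, Pi.add_apply] at h1i ⊢
      linarith
    -- symmetry of E in dot products
    have hsym : ∀ u w : Fin n → ℝ, u ⬝ᵥ E.mulVec w = w ⬝ᵥ E.mulVec u := by
      intro u w
      rw [dotProduct_mulVec, ← mulVec_transpose, hE, dotProduct_comm]
    have h3 : y ⬝ᵥ E.mulVec y - x ⬝ᵥ E.mulVec x = (y + x) ⬝ᵥ E.mulVec (y - x) := by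
      rw [mulVec_sub, dotProduct_sub, add_dotProduct, add_dotProduct]
      have := hsym x y
      ring_nf
      linarith [hsym x y]
    have h4 : (y + x) ⬝ᵥ E.mulVec (y - x) = (y + x) ⬝ᵥ A.mulVec (y + x) := by rw [h2]
    have := hAq (y + x)
    linarith [h3, h4.symm ▸ this]
  -- the Loewner inequality
  have hquad : ∀ x : Fin n → ℝ,
      x ⬝ᵥ (Cᵀ * E * C).mulVec x = (C.mulVec x) ⬝ᵥ E.mulVec (C.mulVec x) := by
    intro x
    rw [← mulVec_mulVec, ← mulVec_mulVec, dotProduct_mulVec, vecMul_transpose, mulVec_mulVec]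
  clear_value C
  have hpsd : (E - Cᵀ * E * C).PosSemidef := by
    refine Matrix.PosSemidef.of_dotProduct_mulVec_nonneg ?_ ?_
    · show (E - Cᵀ * E * C)ᴴ = _
      rw [conjTranspose_eq_transpose_of_trivial, transpose_sub, hE, transpose_mul,
        transpose_mul, transpose_transpose, hE, mul_assoc]
    · intro x
      simp only [star_trivial, sub_mulVec, dotProduct_sub]
      rw [hquad x]
      linarith [key x]
  refine ⟨hunit, hpsd, fun x => ?_⟩
  exact Real.sqrt_le_sqrt (key x)
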